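/- Correctness equalities of the multi-client comparison of the encrypted ORE scheme: let G, Ĝ, G_T be commutative groups with a bilinear map e : G → Ĝ → G_T, H : List Bool → G any function, g ∈ G, ĝ ∈ Ĝ, and integers a_j, a_k, s_j, s_k, r, along with arbitrary integers t_{i,b}, t'_{i,b} for i ∈ [n], b ∈ {0,1}. Define h_j = g^{a_j}, h_k = g^{a_k}, the ciphertexts C_{i,b,0} = H(E_b(i, m))^{s_j}·h_j^{t_{i,b}}, C_{i,b,1} = g^{t_{i,b}}, C'_{i,b,0} = H(E_b(i, m'))^{s_k}·h_k^{t'_{i,b}}, C'_{i,b,1} = g^{t'_{i,b}}, and the comparison key K_{0,0} = (ĝ^{s_j})^r, K_{0,1} = ((ĝ^{a_k})^{s_j})^r, K_{1,0} = (ĝ^{s_k})^r, K_{1,1} = ((ĝ^{a_j})^{s_k})^r. If val(m) < val(m') with i* = ind(m, m'), then for all i < i*: e(C_{i,0,0}, K_{1,0})·e(C_{i,0,1}, K_{1,1})^{-1} = e(C'_{i,0,0}, K_{0,0})·e(C'_{i,0,1}, K_{0,1})^{-1}, and at i*: e(C_{i*,1,0}, K_{1,0})·e(C_{i*,1,1},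 K_{1,1})^{-1} = e(C'_{i*,0,0}, K_{0,0})·e(C'_{i*,0,1}, K_{0,1})^{-1}. -/

import Mathlib

/-- `prefixBits m i` is the list of bits of `m` strictly before index `i`
(the bits `x₁ ⋯ x_{i-1}` in 1-based paper notation). -/
def prefixBits {n : ℕ} (m : Fin n → Bool) (i : Fin n) : List Bool :=
  (List.ofFn m).take i.val

/-- `E0 m i = prefix(m,i) ∥ 0 ∥ xᵢ`. -/
def E0 {n : ℕ} (m : Fin n → Bool) (i : Fin n) : List Bool :=
  prefixBits m i ++ [false, m i]

/-- `E1 m i = prefix(m,i) ∥ (xᵢ + 1)` written as two bits: `01` if `xᵢ = 0`, `10` if `xᵢ = 1`. -/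
def E1 {n : ℕ} (m : Fin n → Bool) (i : Fin n) : List Bool :=
  prefixBits m i ++ (if m i then [true, false] else [false, true])

/-- The numeric value of an `n`-bit string, most significant bit first. -/
def msgVal {n : ℕ} (m : Fin n → Bool) : ℕ :=
  ∑ i : Fin n, if m i then 2 ^ (n - 1 - i.val) else 0

/-- The value of a bit string as a binary integer, most significant bit first. -/
def bitsVal (l : List Bool) : ℕ :=
  l.foldl (fun acc b => 2 * acc + (if b then 1 else 0)) 0

section grp
variable {G Ghat GT : Type*} [CommGroup G] [CommGroup Ghat] [CommGroup GT]
  {e : G → Ghat → GT}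

lemma e_zpow_left (hbil₁ : ∀ (u u' : G) (v : Ghat), e (u * u') v = e u v * e u' v) (u : G) (v : Ghat) (a : ℤ) : e (u ^ a) v = e u v ^ a := by
  exact map_zpow (MonoidHom.mk' (fun u => e u v) (fun u u' => hbil₁ u u' v)) u a

lemma e_zpow_right (hbil₂ : ∀ (u : G) (v v' : Ghat), e u (v * v') = e u v * e u v') (u : G) (v : Ghat) (a : ℤ) : e u (v ^ a) = e u v ^ a := by
  exact map_zpow (MonoidHom.mk' (fun v => e u v) (fun v v' => hbil₂ u v v')) v a

lemma key_lemma (hbil₁ : ∀ (u u' : G) (v : Ghat), e (u * u') v = e u v * e u' v)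
    (hbil₂ : ∀ (u : G) (v v' : Ghat), e u (v * v') = e u v * e u v') (X g : G) (gh : Ghat) (s a tt s' r : ℤ) :
    e (X ^ s * (g ^ a) ^ tt) ((gh ^ s') ^ r) * (e (g ^ tt) (((gh ^ a) ^ s') ^ r))⁻¹
      = e X gh ^ (s * s' * r) := by
  have hz : ∀ (u : G) (v : Ghat) (p q : ℤ), e (u ^ p) (v ^ q) = e u v ^ (q * p) := by
    intro u v p q
    rw [e_zpow_left hbil₁, e_zpow_right hbil₂, ← zpow_mul]
  rw [hbil₁, show (g ^ a) ^ tt = g ^ (a * tt) from (zpow_mul g a tt).symm,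
    show (gh ^ s') ^ r = gh ^ (s' * r) from (zpow_mul gh s' r).symm,
    show ((gh ^ a) ^ s') ^ r = gh ^ (a * (s' * r)) from by rw [← zpow_mul, ← zpow_mul],
    hz, hz, hz]
  rw [show s' * r * (a * tt) = a * (s' * r) * tt from by ring, mul_inv_cancel_right,
    show s' * r * s = s * s' * r from by ring]
end grp

lemma two_pow_sum (n : ℕ) : ∑ k ∈ Finset.range n, 2 ^ k = 2 ^ n - 1 := by
  induction n with
  | zero => simp
  | succ n ih =>
    rw [Finset.sum_range_succ, ih]
    have : 0 < 2 ^ n := Nat.pow_pos (by norm_num)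
    rw [pow_succ]; omega

lemma msgVal_lt {n : ℕ} (a b : Fin n → Bool) (j : Fin n)
    (hpre : ∀ k : Fin n, k < j → a k = b k) (ha : a j = false) (hb : b j = true) :
    msgVal a < msgVal b := by
  classical
  set F : (Fin n → Bool) → Fin n → ℕ := fun c i => if c i then 2 ^ (n - 1 - i.val) else 0 with hF
  have hsplit : ∀ c : Fin n → Bool, msgVal c =
      (∑ i ∈ Finset.univ.filter (fun i => i < j), F c i) + F c j +
      (∑ i ∈ Finset.univ.filter (fun i => j < i), F c i) := by
    intro c
    have h1 : (Finset.univ.filter (fun i : Fin n => ¬ i < j)) =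
        insert j (Finset.univ.filter (fun i => j < i)) := by
      ext i
      simp only [Finset.mem_filter, Finset.mem_univ, true_and, Finset.mem_insert]
      constructor
      · intro h; rcases lt_or_eq_of_le (not_lt.mp h) with h' | h'
        · exact Or.inr h'
        · exact Or.inl h'.symm
      · rintro (rfl | h)
        · simp
        · exact not_lt.mpr h.le
    have h2 : j ∉ Finset.univ.filter (fun i : Fin n => j < i) := by simp
    rw [msgVal]
    rw [← Finset.sum_filter_add_sum_filter_not Finset.univ (fun i => i < j), h1,
      Finset.sum_insert h2]
    ring
  have hgeo : (∑ i ∈ Finset.univ.filter (fun i : Fin n => j < i), F a i) < 2 ^ (n - 1 - j.val) := by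
    have hle : (∑ i ∈ Finset.univ.filter (fun i : Fin n => j < i), F a i)
        ≤ ∑ i ∈ Finset.univ.filter (fun i : Fin n => j < i), 2 ^ (n - 1 - i.val) := by
      apply Finset.sum_le_sum; intro i _; simp only [hF]; split <;> simp
    have himg : (∑ i ∈ Finset.univ.filter (fun i : Fin n => j < i), 2 ^ (n - 1 - i.val))
        = ∑ k ∈ (Finset.univ.filter (fun i : Fin n => j < i)).image (fun i => n - 1 - i.val), 2 ^ k := by
      rw [Finset.sum_image]
      intro x hx y hy hxy
      have hx' : x.val < n := x.isLt
      have hy' : y.val < n := y.isLt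
      have : x.val = y.val := by simp only at hxy; omega
      exact Fin.ext this
    have hsub : (Finset.univ.filter (fun i : Fin n => j < i)).image (fun i => n - 1 - i.val)
        ⊆ Finset.range (n - 1 - j.val) := by
      intro k hk
      simp only [Finset.mem_image, Finset.mem_filter, Finset.mem_univ, true_and] at hk
      obtain ⟨i, hji, rfl⟩ := hk
      have : j.val < i.val := hji
      have : i.val < n := i.isLt
      simp only [Finset.mem_range]; omega
    calc (∑ i ∈ Finset.univ.filter (fun i : Fin n => j < i), F a i)
        ≤ ∑ k ∈ (Finset.univ.filter (fun i : Fin n => j < i)).image (fun i => n - 1 - i.val), 2 ^ k := by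
          rw [← himg]; exact hle
      _ ≤ ∑ k ∈ Finset.range (n - 1 - j.val), 2 ^ k := Finset.sum_le_sum_of_subset hsub
      _ = 2 ^ (n - 1 - j.val) - 1 := two_pow_sum _
      _ < 2 ^ (n - 1 - j.val) := by
          have : 0 < 2 ^ (n - 1 - j.val) := Nat.pow_pos (by norm_num)
          omega
  have hprefix : (∑ i ∈ Finset.univ.filter (fun i : Fin n => i < j), F a i)
      = ∑ i ∈ Finset.univ.filter (fun i : Fin n => i < j), F b i := by
    apply Finset.sum_congr rfl
    intro i hi
    simp only [Finset.mem_filter, Finset.mem_univ, true_and] at hi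
    simp [hF, hpre i hi]
  have hFa : F a j = 0 := by simp [hF, ha]
  have hFb : F b j = 2 ^ (n - 1 - j.val) := by simp [hF, hb]
  have h1 := hsplit a
  have h2 := hsplit b
  have hnn : 0 ≤ ∑ i ∈ Finset.univ.filter (fun i : Fin n => j < i), F b i := Nat.zero_le _
  omega

lemma prefixBits_congr {n : ℕ} {m m' : Fin n → Bool} (i : Fin n)
    (h : ∀ k : Fin n, k.val < i.val → m k = m' k) : prefixBits m i = prefixBits m' i := by
  unfold prefixBits
  apply List.ext_getElem
  · simp
  · intro k h1 h2
    simp only [List.getElem_take, List.getElem_ofFn]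
    have hk : k < i.val := by
      simpa using h1
    exact h ⟨k, by omega⟩ hk

/-- correctness equalities of the multi-client comparison of the encrypted
ORE scheme. -/
theorem eore_compareMC_equalities {G Ghat GT : Type*}
    [CommGroup G] [CommGroup Ghat] [CommGroup GT]
    (e : G → Ghat → GT)
    (hbil₁ : ∀ (u u' : G) (v : Ghat), e (u * u') v = e u v * e u' v)
    (hbil₂ : ∀ (u : G) (v v' : Ghat), e u (v * v') = e u v * e u v')
    (H : List Bool → G) (g : G) (ghat : Ghat)
    (aj ak sj sk r : ℤ)
    {n : ℕ} (t t' : Fin n → Bool → ℤ)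
    (m m' : Fin n → Bool) (hlt : msgVal m < msgVal m')
    (istar : Fin n) (hd : m istar ≠ m' istar)
    (hmin : ∀ k : Fin n, k < istar → m k = m' k) :
    (∀ i : Fin n, i < istar →
      e (H (E0 m i) ^ sj * (g ^ aj) ^ t i false) ((ghat ^ sk) ^ r)
          * (e (g ^ t i false) (((ghat ^ aj) ^ sk) ^ r))⁻¹
        = e (H (E0 m' i) ^ sk * (g ^ ak) ^ t' i false) ((ghat ^ sj) ^ r)
          * (e (g ^ t' i false) (((ghat ^ ak) ^ sj) ^ r))⁻¹) ∧
    e (H (E1 m istar) ^ sj * (g ^ aj) ^ t istar true) ((ghat ^ sk) ^ r)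
        * (e (g ^ t istar true) (((ghat ^ aj) ^ sk) ^ r))⁻¹
      = e (H (E0 m' istar) ^ sk * (g ^ ak) ^ t' istar false) ((ghat ^ sj) ^ r)
        * (e (g ^ t' istar false) (((ghat ^ ak) ^ sj) ^ r))⁻¹ := by
  constructor
  · intro i hi
    have hE : E0 m i = E0 m' i := by
      unfold E0
      rw [prefixBits_congr i (fun k hk => hmin k (lt_trans (Fin.lt_def.mpr hk) hi)),
        hmin i hi]
    rw [key_lemma hbil₁ hbil₂, key_lemma hbil₁ hbil₂, hE,
      show sj * sk * r = sk * sj * r from by ring]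
  · have hm : m istar = false := by
      by_contra hmt
      have hmt : m istar = true := by cases h : m istar <;> simp_all
      have hm' : m' istar = false := by cases h : m' istar <;> simp_all
      exact lt_asymm hlt (msgVal_lt m' m istar (fun k hk => (hmin k hk).symm) hm' hmt)
    have hm' : m' istar = true := by cases h : m' istar <;> simp_all
    have hE : E1 m istar = E0 m' istar := by
      unfold E1 E0
      rw [hm, hm', prefixBits_congr istar (fun k hk => hmin k (Fin.lt_def.mpr hk))]
      simp
    rw [key_lemma hbil₁ hbil₂, key_lemma hbil₁ hbil₂, hE,
      show sj * sk * r = sk * sj * r from by ring]
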